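/- If C is a sum closed permutation class, then |C_{m+n}| ≥ |C_m| · |C_n| for all natural numbers m and n, and consequently the sequence |C_n|^{1/n} converges (in the extended nonnegative reals [0,∞]) to sup_{n≥1} |C_n|^{1/n}; that is, every sum closed permutation class has a proper growth rate. -/

import Mathlib

open Filter Topology ENNReal

/-- A permutation of length `n`, in one-line notation `π 0, π 1, …, π (n-1)`. -/
abbrev Perm (n : ℕ) := Equiv.Perm (Fin n)

/-- `Pattern σ π` : the permutation `σ` is contained in `π`, i.e. some subsequence of `π`
is order isomorphic to `σ`. -/
def Pattern {k n : ℕ} (σ : Perm k) (π : Perm n) : Prop :=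
  ∃ f : Fin k ↪o Fin n, ∀ i j : Fin k, σ i < σ j ↔ π (f i) < π (f j)

/-- A permutation class: a set of permutations closed downwards under containment. -/
structure PermClass where
  mem : ∀ n, Set (Perm n)
  closed : ∀ {k n : ℕ} (σ : Perm k) (π : Perm n), π ∈ mem n → Pattern σ π → σ ∈ mem k

/-- The entries of `π` at the positions in `A` form a sequence order isomorphic
to a member of the family `F`. -/
def SubpermIn {n : ℕ} (π : Perm n) (A : Set (Fin n)) (F : ∀ m, Set (Perm m)) : Prop :=
  ∃ (m : ℕ) (σ : Perm m) (f : Fin m ↪o Fin n),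
    Set.range ⇑f = A ∧ (∀ i j : Fin m, σ i < σ j ↔ π (f i) < π (f j)) ∧ σ ∈ F m

/-- The merge `C ⊙ D`: permutations whose entries can be partitioned into a subsequence
order isomorphic to a member of `C` and one order isomorphic to a member of `D`. -/
def mergeSet (C D : ∀ m, Set (Perm m)) (n : ℕ) : Set (Perm n) :=
  {π | ∃ A : Set (Fin n), SubpermIn π A C ∧ SubpermIn π Aᶜ D}

/-- `|F_n| ^ (1/n)` as a real number. -/
noncomputable def growthSeq (F : ∀ m, Set (Perm m)) (n : ℕ) : ℝ :=
  ((F n).ncard : ℝ) ^ ((n : ℝ)⁻¹)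

/-- The family `F` has (finite) proper growth rate `g`. -/
def HasGrowth (F : ∀ m, Set (Perm m)) (g : ℝ) : Prop :=
  Tendsto (growthSeq F) atTop (𝓝 g)

/-- `|F_n| ^ (1/n)` in the extended nonnegative reals. -/
noncomputable def eGrowthSeq (F : ∀ m, Set (Perm m)) (n : ℕ) : ℝ≥0∞ :=
  ((F n).ncard : ℝ≥0∞) ^ ((n : ℝ)⁻¹)

/-- The upper growth rate `limsup |F_n|^(1/n)`. -/
noncomputable def ugr (F : ∀ m, Set (Perm m)) : ℝ≥0∞ := limsup (eGrowthSeq F) atTop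

/-- The lower growth rate `liminf |F_n|^(1/n)`. -/
noncomputable def lgr (F : ∀ m, Set (Perm m)) : ℝ≥0∞ := liminf (eGrowthSeq F) atTop

/-- The direct sum `π ⊕ σ` of two permutations. -/
def dsum {m n : ℕ} (π : Perm m) (σ : Perm n) : Perm (m + n) :=
  finSumFinEquiv.symm.trans ((Equiv.sumCongr π σ).trans finSumFinEquiv)

/-- The skew sum `π ⊖ σ` of two permutations. -/
def skewSum {m n : ℕ} (π : Perm m) (σ : Perm n) : Perm (m + n) :=
  finSumFinEquiv.symm.trans ((Equiv.sumCongr π σ).trans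
    (((Equiv.sumComm (Fin m) (Fin n)).trans finSumFinEquiv).trans (finCongr (Nat.add_comm n m))))

/-- A family of permutations is sum closed if it is closed under `⊕`. -/
def SumClosed (F : ∀ m, Set (Perm m)) : Prop :=
  ∀ {m n : ℕ} (π : Perm m) (σ : Perm n), π ∈ F m → σ ∈ F n → dsum π σ ∈ F (m + n)

/-- A family of permutations is skew closed if it is closed under `⊖`. -/
def SkewClosed (F : ∀ m, Set (Perm m)) : Prop :=
  ∀ {m n : ℕ} (π : Perm m) (σ : Perm n), π ∈ F m → σ ∈ F n → skewSum π σ ∈ F (m + n)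

/-- The class of an empty (blocked) grid cell: only the empty permutation. -/
def emptyCell : ∀ m, Set (Perm m) := fun m => {_π | m = 0}

/-- The set of positions of `π` lying in column `k` and row `ℓ` of the gridding
determined by the column divisions `c` and row divisions `r`. -/
def cellSet {n : ℕ} (π : Perm n) (c r : ℕ → ℕ) (k ℓ : ℕ) : Set (Fin n) :=
  {i | c k ≤ (i : ℕ) ∧ (i : ℕ) < c (k + 1) ∧ r ℓ ≤ (π i : ℕ) ∧ (π i : ℕ) < r (ℓ + 1)}

/-- The grid class of an (infinite) matrix `M` of families of permutations, where
`M k ℓ` is the cell in column `k`, row `ℓ` (Cartesian coordinates, indexed from 0). -/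
def gridSet (M : ℕ → ℕ → ∀ m, Set (Perm m)) (n : ℕ) : Set (Perm n) :=
  {π | ∃ c r : ℕ → ℕ, Monotone c ∧ Monotone r ∧ c 0 = 0 ∧ r 0 = 0 ∧
    (∀ k, c k ≤ n) ∧ (∀ ℓ, r ℓ ≤ n) ∧ (∃ k, c k = n) ∧ (∃ ℓ, r ℓ = n) ∧
    ∀ k ℓ, cellSet π c r k ℓ = ∅ ∨ SubpermIn π (cellSet π c r k ℓ) (M k ℓ)}

/-- The matrix of the infinite increasing `(C, D)` staircase: cell in column `i`, row `i`
is `C`, cell in column `i+1`, row `i` is `D`, all other cells empty. -/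
def incStairM (C D : ∀ m, Set (Perm m)) : ℕ → ℕ → ∀ m, Set (Perm m) :=
  fun k ℓ => if k = ℓ then C else if k = ℓ + 1 then D else emptyCell

/-- The decreasing permutation `k (k-1) ⋯ 2 1` of length `k`. -/
def delta (k : ℕ) : Perm k := ⟨Fin.rev, Fin.rev, Fin.rev_rev, Fin.rev_rev⟩

/-- The class of permutations avoiding the pattern `τ`. -/
def avSet {k : ℕ} (τ : Perm k) : ∀ n, Set (Perm n) := fun n => {π | ¬ Pattern τ π}

/-- The shape of an infinite `(C,D)` staircase: `pos j` is the (column, row) position of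
the `(j+1)`-st cell; odd-indexed steps share a row with their predecessor, even-indexed
steps share a column with their predecessor, and no other sharing of rows or columns occurs. -/
structure StaircaseData where
  pos : ℕ → ℕ × ℕ
  inj : Function.Injective pos
  rowEq : ∀ i, (pos (2 * i + 1)).2 = (pos (2 * i)).2
  colEq : ∀ i, (pos (2 * i + 2)).1 = (pos (2 * i + 1)).1
  rowOnly : ∀ j j', (pos j).2 = (pos j').2 → j / 2 = j' / 2
  colOnly : ∀ j j', (pos j).1 = (pos j').1 → (j + 1) / 2 = (j' + 1) / 2

open Classical in
/-- The matrix of the infinite `(C,D)` staircase with shape `S`: the odd-numbered cells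
(cells `1, 3, 5, …`, i.e. `pos 0, pos 2, …`) are `C`, the even-numbered cells are `D`. -/
noncomputable def StaircaseData.M (S : StaircaseData) (C D : ∀ m, Set (Perm m)) :
    ℕ → ℕ → ∀ m, Set (Perm m) :=
  fun k ℓ => if ∃ i, S.pos (2 * i) = (k, ℓ) then C
    else if ∃ i, S.pos (2 * i + 1) = (k, ℓ) then D else emptyCell

open Classical in
/-- The matrix of the `t`-step restriction of the staircase: only the first `2t` cells. -/
noncomputable def StaircaseData.Mstep (S : StaircaseData) (C D : ∀ m, Set (Perm m)) (t : ℕ) :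
    ℕ → ℕ → ∀ m, Set (Perm m) :=
  fun k ℓ => if ∃ i < t, S.pos (2 * i) = (k, ℓ) then C
    else if ∃ i < t, S.pos (2 * i + 1) = (k, ℓ) then D else emptyCell


private theorem supermult_aux (C : PermClass) (h : SumClosed C.mem) (m n : ℕ) :
    (C.mem m).ncard * (C.mem n).ncard ≤ (C.mem (m + n)).ncard := by
  have hinj : Function.Injective (fun p : Perm m × Perm n => dsum p.1 p.2) := by
    rintro ⟨π, σ⟩ ⟨π', σ'⟩ hps
    simp only at hps
    have h1 : ∀ x, dsum π σ x = dsum π' σ' x := fun x => congrArg (fun e : Perm (m + n) => e x) hps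
    simp only [Prod.mk.injEq]
    constructor
    · ext i
      have := h1 (finSumFinEquiv (Sum.inl i))
      simp only [dsum, Equiv.trans_apply, Equiv.symm_apply_apply, Equiv.sumCongr_apply,
        Sum.map_inl] at this
      exact congrArg _ (by simpa using finSumFinEquiv.injective this)
    · ext i
      have := h1 (finSumFinEquiv (Sum.inr i))
      simp only [dsum, Equiv.trans_apply, Equiv.symm_apply_apply, Equiv.sumCongr_apply,
        Sum.map_inr] at this
      exact congrArg _ (by simpa using finSumFinEquiv.injective this)
  have hprod : (C.mem m ×ˢ C.mem n).ncard = (C.mem m).ncard * (C.mem n).ncard := by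
    rw [← Nat.card_coe_set_eq, ← Nat.card_coe_set_eq, ← Nat.card_coe_set_eq,
      Nat.card_congr (Equiv.Set.prod _ _), Nat.card_prod]
  calc (C.mem m).ncard * (C.mem n).ncard
      = ((fun p : Perm m × Perm n => dsum p.1 p.2) '' (C.mem m ×ˢ C.mem n)).ncard := by
        rw [Set.ncard_image_of_injective _ hinj, hprod]
    _ ≤ (C.mem (m + n)).ncard := by
        apply Set.ncard_le_ncard _ (Set.toFinite _)
        rintro _ ⟨⟨π, σ⟩, ⟨hπ, hσ⟩, rfl⟩
        exact h π σ hπ hσ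

/-- If `C` is sum closed, then `|C_{m+n}| ≥ |C_m| · |C_n|` for all `m, n`,
and consequently `|C_n|^(1/n)` converges in `[0,∞]` to `sup_{n ≥ 1} |C_n|^(1/n)`;
that is, every sum closed permutation class has a proper growth rate. -/
theorem sumClosed_supermultiplicative_and_growth (C : PermClass) (h : SumClosed C.mem) :
    (∀ m n : ℕ, (C.mem m).ncard * (C.mem n).ncard ≤ (C.mem (m + n)).ncard) ∧
      Tendsto (eGrowthSeq C.mem) atTop
        (𝓝 (⨆ n : ℕ, ⨆ _ : 1 ≤ n, eGrowthSeq C.mem n)) := by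
  have hsup : ∀ m n : ℕ, (C.mem m).ncard * (C.mem n).ncard ≤ (C.mem (m + n)).ncard :=
    supermult_aux C h
  refine ⟨hsup, ?_⟩
  set a : ℕ → ℕ := fun k => (C.mem k).ncard with ha
  by_cases h1 : C.mem 1 = ∅
  · -- degenerate case: everything of positive length is empty
    have hz : ∀ n, 1 ≤ n → eGrowthSeq C.mem n = 0 := by
      intro n hn
      have hempty : C.mem n = ∅ := by
        by_contra hne
        obtain ⟨π, hπ⟩ := Set.nonempty_iff_ne_empty.2 hne
        have hf : Fin 1 ↪o Fin n := OrderEmbedding.ofStrictMono (fun _ => ⟨0, by omega⟩)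
          (fun p q hpq => absurd hpq (by
            have := p.isLt; have := q.isLt
            rw [Fin.lt_def]; omega))
        have : (1 : Perm 1) ∈ C.mem 1 := C.closed 1 π hπ ⟨hf, by
          intro i j; rw [Subsingleton.elim i j]; simp⟩
        rw [h1] at this; exact this
      simp [eGrowthSeq, hempty, ENNReal.zero_rpow_of_pos (by positivity : (0:ℝ) < (n:ℝ)⁻¹)]
    have hsupz : (⨆ n : ℕ, ⨆ _ : 1 ≤ n, eGrowthSeq C.mem n) = 0 :=
      le_antisymm (iSup₂_le fun n hn => (hz n hn).le) zero_le
    rw [hsupz]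
    apply Tendsto.congr' _ (tendsto_const_nhds (x := (0:ℝ≥0∞)))
    filter_upwards [eventually_ge_atTop 1] with n hn
    exact (hz n hn).symm
  · -- nondegenerate case
    obtain ⟨τ, hτ⟩ := Set.nonempty_iff_ne_empty.2 h1
    have h0 : (C.mem 0).Nonempty := by
      refine ⟨1, C.closed 1 τ hτ ⟨OrderEmbedding.ofStrictMono (fun i => i.elim0)
        (fun p => p.elim0), fun i => i.elim0⟩⟩
    have hone : ∀ k, 1 ≤ a k := by
      intro k
      induction k with
      | zero => exact (Set.ncard_pos (Set.toFinite _)).2 h0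
      | succ k ih =>
          have h2 := hsup 1 k
          have h3 : 1 ≤ a 1 := (Set.ncard_pos (Set.toFinite _)).2 ⟨τ, hτ⟩
          have : 1 * 1 ≤ a (1 + k) := le_trans (Nat.mul_le_mul h3 ih) h2
          simpa [Nat.add_comm] using this
    have hpow : ∀ m q r, a m ^ q * a r ≤ a (m * q + r) := by
      intro m q
      induction q with
      | zero => intro r; simpa using le_refl (a r)
      | succ q ih =>
          intro r
          have h2 : a m ^ q * a r ≤ a (m * q + r) := ih r
          calc a m ^ (q + 1) * a r = a m * (a m ^ q * a r) := by ring
            _ ≤ a m * a (m * q + r) := Nat.mul_le_mul_left _ h2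
            _ ≤ a (m + (m * q + r)) := hsup m _
            _ = a (m * (q + 1) + r) := congrArg a (by ring)
    have hlb : ∀ m, 1 ≤ m → eGrowthSeq C.mem m ≤ liminf (eGrowthSeq C.mem) atTop := by
      intro m hm
      set c : ℝ≥0∞ := ((a m : ℕ) : ℝ≥0∞) with hc
      have hm0 : (m : ℝ) ≠ 0 := Nat.cast_ne_zero.2 (by omega)
      -- the exponents tend to 1/m
      have hmod : Tendsto (fun n : ℕ => ((n % m : ℕ) : ℝ) * ((n : ℝ))⁻¹) atTop (𝓝 0) := by
        apply squeeze_zero (fun n => by positivity) (fun n => ?_)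
          (tendsto_const_div_atTop_nhds_zero_nat (m : ℝ))
        rw [div_eq_mul_inv]
        gcongr
        exact_mod_cast (Nat.mod_lt n (by omega)).le
      have hy : Tendsto (fun n : ℕ => ((n / m : ℕ) : ℝ) * ((n : ℝ))⁻¹) atTop (𝓝 ((m : ℝ)⁻¹)) := by
        have h2 : Tendsto (fun n : ℕ => (m : ℝ)⁻¹ - (m : ℝ)⁻¹ * (((n % m : ℕ) : ℝ) * ((n : ℝ))⁻¹))
            atTop (𝓝 ((m : ℝ)⁻¹)) := by
          have h3 := hmod.const_mul ((m : ℝ)⁻¹)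
          simpa using tendsto_const_nhds.sub h3
        apply h2.congr'
        filter_upwards [eventually_ge_atTop 1] with n hn
        have hn0 : (n : ℝ) ≠ 0 := Nat.cast_ne_zero.2 (by omega)
        have hdm : (m : ℝ) * ((n / m : ℕ) : ℝ) + ((n % m : ℕ) : ℝ) = (n : ℝ) := by
          exact_mod_cast Nat.div_add_mod n m
        field_simp
        linear_combination (-1 : ℝ) * hdm
      have hcpos : (0 : ℝ) < ((a m : ℕ) : ℝ) := by exact_mod_cast hone m
      have hco : ∀ x : ℝ, c ^ x = ENNReal.ofReal (((a m : ℕ) : ℝ) ^ x) := by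
        intro x
        rw [← ENNReal.ofReal_rpow_of_pos hcpos]
        congr 1
        rw [hc, ENNReal.ofReal_natCast]
      have hcont : Tendsto (fun n : ℕ => c ^ (((n / m : ℕ) : ℝ) * ((n : ℝ))⁻¹)) atTop
          (𝓝 (c ^ ((m : ℝ)⁻¹))) := by
        simp only [hco]
        exact (ENNReal.continuous_ofReal.tendsto _).comp
          ((Real.continuousAt_const_rpow (ne_of_gt hcpos)).tendsto.comp hy)
      have hle : ∀ᶠ n in atTop,
          c ^ (((n / m : ℕ) : ℝ) * ((n : ℝ))⁻¹) ≤ eGrowthSeq C.mem n := by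
        filter_upwards [eventually_ge_atTop 1] with n hn
        have h4 : a m ^ (n / m) ≤ a n := by
          have h5 := hpow m (n / m) (n % m)
          have h6 : m * (n / m) + n % m = n := Nat.div_add_mod n m
          calc a m ^ (n / m) ≤ a m ^ (n / m) * a (n % m) :=
                Nat.le_mul_of_pos_right _ (hone _)
            _ ≤ a n := by rw [h6] at h5; exact h5
        have h7 : c ^ (n / m) ≤ ((a n : ℕ) : ℝ≥0∞) := by
          rw [hc]
          exact_mod_cast Nat.cast_le.2 h4
        calc c ^ (((n / m : ℕ) : ℝ) * ((n : ℝ))⁻¹)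
            = (c ^ (n / m : ℕ)) ^ ((n : ℝ))⁻¹ := by
              rw [← ENNReal.rpow_natCast c (n / m), ← ENNReal.rpow_mul]
          _ ≤ (((a n : ℕ) : ℝ≥0∞)) ^ ((n : ℝ))⁻¹ := ENNReal.rpow_le_rpow h7 (by positivity)
          _ = eGrowthSeq C.mem n := rfl
      have heq : eGrowthSeq C.mem m = c ^ ((m : ℝ)⁻¹) := rfl
      rw [heq, ← hcont.liminf_eq]
      exact liminf_le_liminf hle
    set S := ⨆ n : ℕ, ⨆ _ : 1 ≤ n, eGrowthSeq C.mem n with hS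
    have hSle : S ≤ liminf (eGrowthSeq C.mem) atTop := iSup₂_le hlb
    have hls : limsup (eGrowthSeq C.mem) atTop ≤ S := by
      refine limsup_le_of_le (by isBoundedDefault) ?_
      filter_upwards [eventually_ge_atTop 1] with n hn
      exact le_iSup₂ (f := fun n (_ : 1 ≤ n) => eGrowthSeq C.mem n) n hn
    have h3 : liminf (eGrowthSeq C.mem) atTop ≤ limsup (eGrowthSeq C.mem) atTop :=
      liminf_le_limsup
    exact tendsto_of_liminf_eq_limsup
      (le_antisymm (h3.trans hls) hSle)
      (le_antisymm hls (hSle.trans h3))
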